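/- Let f(x,z) and g(y,z) be rational functions in Q(x,y,z) such that f(x,z) = f((1/x)·g(y,z), z) as rational functions. Then ∂f/∂x = 0 or ∂g/∂y = 0. -/

import Mathlib

open MvPolynomial

noncomputable section

/-- The field `ℚ(x,y,z)` of rational functions in three variables. -/
abbrev Fld : Type := FractionRing (MvPolynomial (Fin 3) ℚ)

/-- The variables `x = Xv 0`, `y = Xv 1`, `z = Xv 2` of `ℚ(x,y,z)`. -/
def Xv (i : Fin 3) : Fld := algebraMap (MvPolynomial (Fin 3) ℚ) Fld (X i)

namespace StmtAux

abbrev R3 := MvPolynomial (Fin 3) ℚ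
abbrev S2 := MvPolynomial (Fin 2) ℚ

def ι : R3 →ₐ[ℚ] Fld := IsScalarTower.toAlgHom ℚ R3 Fld

lemma ι_inj : Function.Injective ι := IsFractionRing.injective R3 Fld

lemma ι_ne_zero {p : R3} (hp : p ≠ 0) : ι p ≠ 0 := fun h => hp (ι_inj (by simpa using h))

lemma e02_inj : Function.Injective (![0, 2] : Fin 2 → Fin 3) := by decide
lemma e12_inj : Function.Injective (![1, 2] : Fin 2 → Fin 3) := by decide

lemma aevalA (p : S2) : aeval ![Xv 0, Xv 2] p = ι (rename (![0, 2] : Fin 2 → Fin 3) p) := by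
  have : (ι.comp (rename (![0, 2] : Fin 2 → Fin 3)) : S2 →ₐ[ℚ] Fld) = aeval ![Xv 0, Xv 2] := by
    apply algHom_ext
    intro i
    fin_cases i <;> simp [ι, Xv]
  rw [← this]; rfl

lemma aevalG (p : S2) : aeval ![Xv 1, Xv 2] p = ι (rename (![1, 2] : Fin 2 → Fin 3) p) := by
  have : (ι.comp (rename (![1, 2] : Fin 2 → Fin 3)) : S2 →ₐ[ℚ] Fld) = aeval ![Xv 1, Xv 2] := by
    apply algHom_ext
    intro i
    fin_cases i <;> simp [ι, Xv]
  rw [← this]; rfl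

lemma rename02_ne {p : S2} (hp : p ≠ 0) : ι (rename (![0, 2] : Fin 2 → Fin 3) p) ≠ 0 :=
  ι_ne_zero fun h => hp ((rename_injective _ e02_inj) (by simpa using h))

lemma rename12_ne {p : S2} (hp : p ≠ 0) : ι (rename (![1, 2] : Fin 2 → Fin 3) p) ≠ 0 :=
  ι_ne_zero fun h => hp ((rename_injective _ e12_inj) (by simpa using h))

lemma Xv0_ne : Xv 0 ≠ 0 := ι_ne_zero (X_ne_zero 0)

/-! ### The homogenized substitution -/

def homN (p : S2) (N : ℕ) : MvPolynomial (Fin 3) ℚ :=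
  ∑ m ∈ p.support,
    monomial (Finsupp.single 0 (m 0) + Finsupp.single 1 (N - m 0) + Finsupp.single 2 (m 1))
      (coeff m p)

section SumFormulas

variable {K : Type*} [CommRing K] [Algebra ℚ K]

lemma aeval2_eq (v : Fin 2 → K) (p : S2) :
    aeval v p = ∑ m ∈ p.support, algebraMap ℚ K (coeff m p) * (v 0 ^ m 0 * v 1 ^ m 1) := by
  rw [aeval_def, eval₂_eq' (algebraMap ℚ K) v p]
  refine Finset.sum_congr rfl fun m _ => by rw [Fin.prod_univ_two]

lemma aeval2_pderiv0_eq (v : Fin 2 → K) (p : S2) :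
    aeval v (pderiv 0 p)
      = ∑ m ∈ p.support, algebraMap ℚ K (coeff m p * m 0) * (v 0 ^ (m 0 - 1) * v 1 ^ m 1) := by
  conv_lhs => rw [← support_sum_monomial_coeff p]
  rw [map_sum, map_sum]
  refine Finset.sum_congr rfl fun m _ => ?_
  rw [pderiv_monomial, aeval_monomial,
    Finsupp.prod_fintype _ _ (fun i => pow_zero _), Fin.prod_univ_two]
  simp only [Finsupp.coe_tsub, Pi.sub_apply, Finsupp.single_apply]
  norm_num

lemma aeval3_homN (a b c : K) (p : S2) (N : ℕ) :
    aeval ![a, b, c] (homN p N)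
      = ∑ m ∈ p.support,
          algebraMap ℚ K (coeff m p) * (a ^ m 0 * b ^ (N - m 0) * c ^ m 1) := by
  rw [homN, map_sum]
  refine Finset.sum_congr rfl fun m _ => ?_
  rw [aeval_monomial, Finsupp.prod_fintype _ _ (fun i => pow_zero _), Fin.prod_univ_three]
  congr 2 <;> simp [Finsupp.add_apply, Finsupp.single_apply]

lemma aeval3_homN_pd0 (a b c : K) (p : S2) (N : ℕ) :
    aeval ![a, b, c] (pderiv 0 (homN p N))
      = ∑ m ∈ p.support,
          algebraMap ℚ K (coeff m p * m 0) * (a ^ (m 0 - 1) * b ^ (N - m 0) * c ^ m 1) := by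
  rw [homN, map_sum, map_sum]
  refine Finset.sum_congr rfl fun m _ => ?_
  rw [pderiv_monomial, aeval_monomial,
    Finsupp.prod_fintype _ _ (fun i => pow_zero _), Fin.prod_univ_three]
  congr 2
  · push_cast
    congr 2
    simp [Finsupp.add_apply, Finsupp.single_apply]
  all_goals simp [Finsupp.tsub_apply, Finsupp.add_apply, Finsupp.single_apply]

lemma aeval3_homN_pd1 (a b c : K) (p : S2) (N : ℕ) :
    aeval ![a, b, c] (pderiv 1 (homN p N))
      = ∑ m ∈ p.support,
          algebraMap ℚ K (coeff m p * (N - m 0 : ℕ)) * (a ^ m 0 * b ^ (N - m 0 - 1) * c ^ m 1) := by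
  rw [homN, map_sum, map_sum]
  refine Finset.sum_congr rfl fun m _ => ?_
  rw [pderiv_monomial, aeval_monomial,
    Finsupp.prod_fintype _ _ (fun i => pow_zero _), Fin.prod_univ_three]
  congr 2
  · push_cast
    congr 2
    simp [Finsupp.add_apply, Finsupp.single_apply]
  all_goals simp [Finsupp.tsub_apply, Finsupp.add_apply, Finsupp.single_apply]

end SumFormulas

section FieldEval

variable {K : Type*} [Field K] [Algebra ℚ K]

lemma homN_eval (a b c : K) (hb : b ≠ 0) {p : S2} {N : ℕ} (hN : degreeOf 0 p ≤ N) :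
    aeval ![a, b, c] (homN p N) = b ^ N * aeval ![a / b, c] p := by
  rw [aeval3_homN, aeval2_eq, Finset.mul_sum]
  refine Finset.sum_congr rfl fun m hm => ?_
  have hm0 : m 0 ≤ N := le_trans (monomial_le_degreeOf 0 hm) hN
  have hsplit : b ^ N = b ^ (N - m 0) * b ^ m 0 := by rw [← pow_add]; congr 1; omega
  simp only [Matrix.cons_val_zero, Matrix.cons_val_one, Matrix.head_cons]
  rw [div_pow, hsplit]
  field_simp

lemma homN_eval_pd0 (a b c : K) (hb : b ≠ 0) {p : S2} {N : ℕ} (hN : degreeOf 0 p ≤ N) :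
    aeval ![a, b, c] (pderiv 0 (homN p N))
      = b ^ (N - 1) * aeval ![a / b, c] (pderiv 0 p) := by
  rw [aeval3_homN_pd0, aeval2_pderiv0_eq, Finset.mul_sum]
  refine Finset.sum_congr rfl fun m hm => ?_
  have hm0 : m 0 ≤ N := le_trans (monomial_le_degreeOf 0 hm) hN
  simp only [Matrix.cons_val_zero, Matrix.cons_val_one, Matrix.head_cons]
  rcases Nat.eq_zero_or_pos (m 0) with h0 | h0
  · simp [h0]
  · have h1 : 1 ≤ N := le_trans h0 hm0
    have hsplit : b ^ (N - 1) = b ^ (N - m 0) * b ^ (m 0 - 1) := by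
      rw [← pow_add]; congr 1; omega
    rw [div_pow, hsplit]
    field_simp

lemma homN_eval_pd1 (a b c : K) (hb : b ≠ 0) {p : S2} {N : ℕ} (hN : degreeOf 0 p ≤ N) :
    aeval ![a, b, c] (pderiv 1 (homN p N))
      = b ^ (N - 1) *
        ((N : K) * aeval ![a / b, c] p - (a / b) * aeval ![a / b, c] (pderiv 0 p)) := by
  rw [aeval3_homN_pd1, aeval2_eq, aeval2_pderiv0_eq, Finset.mul_sum, Finset.mul_sum,
    ← Finset.sum_sub_distrib, Finset.mul_sum]
  refine Finset.sum_congr rfl fun m hm => ?_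
  have hm0 : m 0 ≤ N := le_trans (monomial_le_degreeOf 0 hm) hN
  simp only [Matrix.cons_val_zero, Matrix.cons_val_one, Matrix.head_cons]
  have hcm : algebraMap ℚ K (coeff m p * (m 0 : ℕ)) = algebraMap ℚ K (coeff m p) * (m 0 : K) := by
    rw [map_mul, map_natCast]
  have hq : ((m 0 : K)) * ((a / b) * (a / b) ^ (m 0 - 1)) = (m 0 : K) * (a / b) ^ m 0 := by
    rcases Nat.eq_zero_or_pos (m 0) with h00 | h00
    · simp [h00]
    · rw [← pow_succ', show m 0 - 1 + 1 = m 0 by omega]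
  rcases eq_or_lt_of_le hm0 with h0 | h0
  · rw [← h0]
    rw [hcm]
    simp only [Nat.sub_self, Nat.cast_zero, mul_zero, map_zero, zero_mul]
    linear_combination (algebraMap ℚ K (coeff m p) * c ^ m 1 * b ^ (m 0 - 1)) * hq
  · have hsplit : b ^ (N - 1) = b ^ (N - m 0 - 1) * b ^ m 0 := by
      rw [← pow_add]; congr 1; omega
    have hcast : (algebraMap ℚ K) (coeff m p * ((N - m 0 : ℕ) : ℚ))
        = algebraMap ℚ K (coeff m p) * ((N : K) - (m 0 : K)) := by
      rw [map_mul]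
      congr 1
      rw [Nat.cast_sub hm0, map_sub, map_natCast, map_natCast]
    have hpow : a ^ m 0 * b ^ (N - m 0 - 1) = b ^ (N - 1) * (a / b) ^ m 0 := by
      rw [hsplit, div_pow]
      field_simp
    rw [hcast, hcm]
    linear_combination (algebraMap ℚ K (coeff m p) * ((N : K) - (m 0 : K)) * c ^ m 1) * hpow
      + (algebraMap ℚ K (coeff m p) * c ^ m 1 * b ^ (N - 1)) * hq

end FieldEval

/-! ### Chain rule -/

lemma pderiv_one_aeval (v : Fin 3 → R3) (q : MvPolynomial (Fin 3) ℚ) :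
    pderiv 1 (aeval v q) = ∑ j : Fin 3, aeval v (pderiv j q) * pderiv 1 (v j) := by
  induction q using MvPolynomial.induction_on with
  | C r => simp [Fin.sum_univ_three]
  | add p q hp hq => simp only [map_add, hp, hq, add_mul, Finset.sum_add_distrib]
  | mul_X p i hp =>
    rw [map_mul, aeval_X, pderiv_mul, hp]
    have hXj : ∀ j : Fin 3, (pderiv j) (p * X i) = pderiv j p * X i + p * pderiv j (X i) :=
      fun j => pderiv_mul
    simp only [hXj, map_add, map_mul, aeval_X]
    fin_cases i <;>
    · simp [Fin.sum_univ_three, pderiv_X, Pi.single_apply]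
      ring

/-! ### The `finSuccEquiv` picture -/

def Φ : R3 ≃ₐ[ℚ] Polynomial S2 := finSuccEquiv ℚ 2

lemma Φ_rename (p : S2) : Φ (rename (![1, 2] : Fin 2 → Fin 3) p) = Polynomial.C p := by
  have : ((Φ : R3 →ₐ[ℚ] Polynomial S2).comp (rename (![1, 2] : Fin 2 → Fin 3)))
      = Polynomial.CAlgHom := by
    apply algHom_ext
    intro i
    fin_cases i <;>
      simp only [AlgHom.coe_comp, Function.comp_apply, rename_X, Polynomial.CAlgHom]
    · show Φ (X 1) = _
      rw [show (1 : Fin 3) = (0 : Fin 2).succ from rfl]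
      exact finSuccEquiv_X_succ
    · show Φ (X 2) = _
      rw [show (2 : Fin 3) = (1 : Fin 2).succ from rfl]
      exact finSuccEquiv_X_succ
  exact DFunLike.congr_fun this p

lemma Φ_X0 : Φ (X 0) = Polynomial.X := finSuccEquiv_X_zero
lemma Φ_X2 : Φ (X 2) = Polynomial.C (X 1) := by
  rw [show (2 : Fin 3) = (1 : Fin 2).succ from rfl]; exact finSuccEquiv_X_succ

lemma homN_aeval_ne_zero {gp gq h : S2} (hgp : gp ≠ 0) (hgq : gq ≠ 0) (hh : h ≠ 0)
    {n : ℕ} (hn : degreeOf 0 h ≤ n) :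
    aeval ![rename (![1, 2] : Fin 2 → Fin 3) gp,
        X 0 * rename (![1, 2] : Fin 2 → Fin 3) gq, X 2] (homN h n) ≠ 0 := by
  intro hW
  obtain ⟨mh, hmh⟩ := support_nonempty.mpr hh
  set k := mh 0 with hkdef
  have hk : k ≤ n := le_trans (monomial_le_degreeOf 0 hmh) hn
  have h2 : aeval ![Polynomial.C gp, Polynomial.X * Polynomial.C gq, Polynomial.C (X 1)]
      (homN h n) = 0 := by
    have this0 := congrArg Φ hW
    rw [map_zero] at this0
    have this2 : (Φ : R3 →ₐ[ℚ] Polynomial S2)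
        (aeval ![rename (![1, 2] : Fin 2 → Fin 3) gp,
          X 0 * rename (![1, 2] : Fin 2 → Fin 3) gq, X 2] (homN h n)) = 0 := this0
    rw [comp_aeval_apply] at this2
    have hv : (fun i => (Φ : R3 →ₐ[ℚ] Polynomial S2)
        (![rename (![1, 2] : Fin 2 → Fin 3) gp,
          X 0 * rename (![1, 2] : Fin 2 → Fin 3) gq, X 2] i))
        = ![Polynomial.C gp, Polynomial.X * Polynomial.C gq, Polynomial.C (X 1)] := by
      funext i
      fin_cases i
      · exact Φ_rename gp
      · show Φ (X 0 * rename _ gq) = Polynomial.X * Polynomial.C gq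
        rw [map_mul, Φ_X0, Φ_rename]
      · exact Φ_X2
    rw [hv] at this2
    exact this2
  rw [aeval3_homN] at h2
  have hterm : ∀ m ∈ h.support,
      algebraMap ℚ (Polynomial S2) (coeff m h) *
        ((Polynomial.C gp) ^ m 0 * (Polynomial.X * Polynomial.C gq) ^ (n - m 0) *
          (Polynomial.C (X 1)) ^ m 1)
      = Polynomial.C (C (coeff m h) * gp ^ m 0 * gq ^ (n - m 0) * (X 1 : S2) ^ m 1) *
          Polynomial.X ^ (n - m 0) := by
    intro m _
    rw [Polynomial.algebraMap_apply, MvPolynomial.algebraMap_eq]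
    simp only [Polynomial.C_mul, Polynomial.C_pow, mul_pow]
    ring
  rw [Finset.sum_congr rfl hterm] at h2
  have h3 := congrArg (Polynomial.coeff · (n - k)) h2
  simp only [Polynomial.finset_sum_coeff, Polynomial.coeff_zero,
    Polynomial.C_mul_X_pow_eq_monomial, Polynomial.coeff_monomial] at h3
  have h4' : (∑ m ∈ h.support,
      (if m 0 = k then C (coeff m h) * gp ^ k * gq ^ (n - k) * (X 1 : S2) ^ m 1 else 0))
      = ∑ m ∈ h.support,
        (if n - m 0 = n - k then C (coeff m h) * gp ^ m 0 * gq ^ (n - m 0) * (X 1 : S2) ^ m 1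
          else 0) := by
    refine Finset.sum_congr rfl fun m hm => ?_
    have hm0 : m 0 ≤ n := le_trans (monomial_le_degreeOf 0 hm) hn
    by_cases hc : m 0 = k
    · rw [if_pos hc, if_pos (show n - m 0 = n - k by omega), hc]
    · rw [if_neg hc, if_neg (show ¬(n - m 0 = n - k) by omega)]
  have h4 : (∑ m ∈ h.support,
      (if m 0 = k then C (coeff m h) * gp ^ k * gq ^ (n - k) * (X 1 : S2) ^ m 1 else 0)) = 0 := by
    rw [h4']; exact h3
  have h5' : gp ^ k * gq ^ (n - k) *
      (∑ m ∈ h.support, (if m 0 = k then C (coeff m h) * (X 1 : S2) ^ m 1 else 0))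
      = ∑ m ∈ h.support,
        (if m 0 = k then C (coeff m h) * gp ^ k * gq ^ (n - k) * (X 1 : S2) ^ m 1 else 0) := by
    rw [Finset.mul_sum]
    refine Finset.sum_congr rfl fun m hm => ?_
    by_cases hc : m 0 = k
    · rw [if_pos hc, if_pos hc]; ring
    · rw [if_neg hc, if_neg hc, mul_zero]
  have h5 : gp ^ k * gq ^ (n - k) *
      (∑ m ∈ h.support, (if m 0 = k then C (coeff m h) * (X 1 : S2) ^ m 1 else 0)) = 0 := by
    rw [h5']; exact h4
  have h6 : (∑ m ∈ h.support, (if m 0 = k then C (coeff m h) * (X 1 : S2) ^ m 1 else 0)) = 0 := by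
    rcases mul_eq_zero.mp h5 with h' | h'
    · exact absurd h' (mul_ne_zero (pow_ne_zero _ hgp) (pow_ne_zero _ hgq))
    · exact h'
  have h7 := congrArg (MvPolynomial.coeff (Finsupp.single 1 (mh 1))) h6
  rw [MvPolynomial.coeff_sum, MvPolynomial.coeff_zero] at h7
  have h8 : ∀ m ∈ h.support, m ≠ mh →
      MvPolynomial.coeff (Finsupp.single 1 (mh 1))
        (if m 0 = k then C (coeff m h) * (X 1 : S2) ^ m 1 else 0) = 0 := by
    intro m hm hne
    by_cases hc : m 0 = k
    · rw [if_pos hc, MvPolynomial.C_mul_X_pow_eq_monomial, MvPolynomial.coeff_monomial]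
      rw [if_neg]
      intro hsingle
      have h1eq : m 1 = mh 1 := Finsupp.single_injective 1 hsingle
      apply hne
      ext i
      fin_cases i
      · exact hc
      · exact h1eq
    · rw [if_neg hc, MvPolynomial.coeff_zero]
  rw [Finset.sum_eq_single_of_mem mh hmh h8] at h7
  rw [if_pos rfl, MvPolynomial.C_mul_X_pow_eq_monomial, MvPolynomial.coeff_monomial,
    if_pos rfl] at h7
  exact (mem_support_iff.mp hmh) h7

/-! ### Transferring the homogenized substitution into the field -/

section Transfer

variable (gp gq : S2)

abbrev vR (gp gq : S2) : Fin 3 → R3 :=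
  ![rename (![1, 2] : Fin 2 → Fin 3) gp, X 0 * rename (![1, 2] : Fin 2 → Fin 3) gq, X 2]

lemma iota_vR (q : MvPolynomial (Fin 3) ℚ) :
    ι (aeval (vR gp gq) q)
      = aeval ![ι (rename (![1, 2] : Fin 2 → Fin 3) gp),
          Xv 0 * ι (rename (![1, 2] : Fin 2 → Fin 3) gq), Xv 2] q := by
  rw [comp_aeval_apply]
  have hv : (fun i => ι (vR gp gq i))
      = ![ι (rename (![1, 2] : Fin 2 → Fin 3) gp),
          Xv 0 * ι (rename (![1, 2] : Fin 2 → Fin 3) gq), Xv 2] := by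
    funext i
    fin_cases i
    · rfl
    · show ι (X 0 * rename _ gq) = Xv 0 * ι (rename _ gq)
      rw [map_mul]; rfl
    · rfl
  rw [hv]

lemma div_eq_t :
    ι (rename (![1, 2] : Fin 2 → Fin 3) gp) / (Xv 0 * ι (rename (![1, 2] : Fin 2 → Fin 3) gq))
      = (Xv 0)⁻¹ * (aeval ![Xv 1, Xv 2] gp / aeval ![Xv 1, Xv 2] gq) := by
  rw [aevalG, aevalG, div_mul_eq_div_div, div_right_comm, ← inv_mul_eq_div]

end Transfer

end StmtAux

set_option maxHeartbeats 2000000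

open StmtAux in
/-- If `f(x,z) = fp/fq` and `g(y,z) = gp/gq` are rational functions with
`f(x,z) = f((1/x)·g(y,z), z)` in `ℚ(x,y,z)` (the substitution being well defined),
then `∂f/∂x = 0` or `∂g/∂y = 0`. The vanishing of the derivative of a quotient `p/q`
is expressed by the vanishing of its numerator `q·∂p - p·∂q`. -/
theorem stmt0 (fp fq gp gq : MvPolynomial (Fin 2) ℚ)
    (hfq : fq ≠ 0) (hgq : gq ≠ 0)
    (hsub : aeval ![(Xv 0)⁻¹ * (aeval ![Xv 1, Xv 2] gp / aeval ![Xv 1, Xv 2] gq), Xv 2] fq ≠ 0)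
    (heq : aeval ![Xv 0, Xv 2] fp / aeval ![Xv 0, Xv 2] fq =
      aeval ![(Xv 0)⁻¹ * (aeval ![Xv 1, Xv 2] gp / aeval ![Xv 1, Xv 2] gq), Xv 2] fp /
      aeval ![(Xv 0)⁻¹ * (aeval ![Xv 1, Xv 2] gp / aeval ![Xv 1, Xv 2] gq), Xv 2] fq) :
    fq * pderiv 0 fp - fp * pderiv 0 fq = 0 ∨ gq * pderiv 0 gp - gp * pderiv 0 gq = 0 := by
  classical
  by_cases hgp : gp = 0
  · right; simp [hgp]
  -- notation
  set t : Fld := (Xv 0)⁻¹ * (aeval ![Xv 1, Xv 2] gp / aeval ![Xv 1, Xv 2] gq) with htdef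
  set A : Fld := ι (rename (![1, 2] : Fin 2 → Fin 3) gp) with hAdef
  set Bq : Fld := ι (rename (![1, 2] : Fin 2 → Fin 3) gq) with hBqdef
  have hu : Xv 0 ≠ 0 := Xv0_ne
  have hBqne : Bq ≠ 0 := rename12_ne hgq
  have hb : Xv 0 * Bq ≠ 0 := mul_ne_zero hu hBqne
  have ht : A / (Xv 0 * Bq) = t := div_eq_t gp gq
  have hfqA : aeval ![Xv 0, Xv 2] fq ≠ 0 := by rw [aevalA]; exact rename02_ne hfq
  -- cross-multiplied hypothesis
  have hE : aeval ![Xv 0, Xv 2] fp * aeval ![t, Xv 2] fq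
      = aeval ![t, Xv 2] fp * aeval ![Xv 0, Xv 2] fq :=
    (div_eq_div_iff hfqA hsub).mp heq
  set N : ℕ := max (degreeOf 0 fp) (degreeOf 0 fq) + 1 with hNdef
  have hNfp : degreeOf 0 fp ≤ N := le_trans le_sup_left (Nat.le_succ _)
  have hNfq : degreeOf 0 fq ≤ N := le_trans le_sup_right (Nat.le_succ _)
  -- K-level values of the homogenized substitution
  have hHom : ∀ (p : MvPolynomial (Fin 2) ℚ), degreeOf 0 p ≤ N →
      ι (aeval (vR gp gq) (homN p N)) = (Xv 0 * Bq) ^ N * aeval ![t, Xv 2] p := by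
    intro p hNp
    rw [iota_vR, homN_eval _ _ _ hb hNp, ht]
  have hHom0 : ∀ (p : MvPolynomial (Fin 2) ℚ), degreeOf 0 p ≤ N →
      ι (aeval (vR gp gq) (pderiv 0 (homN p N)))
        = (Xv 0 * Bq) ^ (N - 1) * aeval ![t, Xv 2] (pderiv 0 p) := by
    intro p hNp
    rw [iota_vR, homN_eval_pd0 _ _ _ hb hNp, ht]
  have hHom1 : ∀ (p : MvPolynomial (Fin 2) ℚ), degreeOf 0 p ≤ N →
      ι (aeval (vR gp gq) (pderiv 1 (homN p N)))
        = (Xv 0 * Bq) ^ (N - 1) *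
            ((N : Fld) * aeval ![t, Xv 2] p - t * aeval ![t, Xv 2] (pderiv 0 p)) := by
    intro p hNp
    rw [iota_vR, homN_eval_pd1 _ _ _ hb hNp, ht]
  -- the polynomial identity
  have hP : rename (![0, 2] : Fin 2 → Fin 3) fp * aeval (vR gp gq) (homN fq N)
      = aeval (vR gp gq) (homN fp N) * rename (![0, 2] : Fin 2 → Fin 3) fq := by
    apply ι_inj
    rw [map_mul, map_mul, hHom fq hNfq, hHom fp hNfp, ← aevalA, ← aevalA]
    linear_combination ((Xv 0 * Bq) ^ N) * hE
  -- differentiate with respect to y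
  have hP1 := congrArg (pderiv 1) hP
  rw [pderiv_mul, pderiv_mul] at hP1
  have hz02 : ∀ p : MvPolynomial (Fin 2) ℚ,
      pderiv 1 (rename (![0, 2] : Fin 2 → Fin 3) p) = 0 := by
    intro p
    apply pderiv_eq_zero_of_notMem_vars
    intro hmem
    have := vars_rename (![0, 2] : Fin 2 → Fin 3) p hmem
    simp only [Finset.mem_image] at this
    obtain ⟨i, _, hi⟩ := this
    fin_cases i <;> simp_all
  rw [hz02 fp, hz02 fq, zero_mul, zero_add, mul_zero, add_zero] at hP1
  -- chain rule
  have hchain : ∀ p : MvPolynomial (Fin 2) ℚ,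
      pderiv 1 (aeval (vR gp gq) (homN p N))
        = aeval (vR gp gq) (pderiv 0 (homN p N)) * rename (![1, 2] : Fin 2 → Fin 3) (pderiv 0 gp)
          + aeval (vR gp gq) (pderiv 1 (homN p N)) *
              (X 0 * rename (![1, 2] : Fin 2 → Fin 3) (pderiv 0 gq)) := by
    intro p
    rw [pderiv_one_aeval, Fin.sum_univ_three]
    have hv0 : pderiv 1 (vR gp gq 0) = rename (![1, 2] : Fin 2 → Fin 3) (pderiv 0 gp) :=
      pderiv_rename e12_inj 0 gp
    have hv1 : pderiv 1 (vR gp gq 1) = X 0 * rename (![1, 2] : Fin 2 → Fin 3) (pderiv 0 gq) := by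
      show pderiv 1 (X 0 * rename (![1, 2] : Fin 2 → Fin 3) gq) = _
      rw [pderiv_mul, pderiv_X_of_ne (show (0 : Fin 3) ≠ 1 by decide), zero_mul, zero_add]
      congr 1
      exact pderiv_rename e12_inj 0 gq
    have hv2 : pderiv 1 (vR gp gq 2) = 0 := by
      show pderiv 1 (X 2 : R3) = 0
      exact pderiv_X_of_ne (show (2 : Fin 3) ≠ 1 by decide)
    rw [hv0, hv1, hv2, mul_zero, add_zero]
  rw [hchain fp, hchain fq] at hP1
  -- map into the field
  have hK := congrArg ι hP1
  simp only [map_mul, map_add] at hK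
  rw [hHom0 fp hNfp, hHom0 fq hNfq, hHom1 fp hNfp, hHom1 fq hNfq,
    show ι (X 0) = Xv 0 from rfl, ← aevalA fp, ← aevalA fq] at hK
  -- cancel the common power
  have hcne : ((Xv 0 * Bq) ^ (N - 1) : Fld) ≠ 0 := pow_ne_zero _ hb
  set α : Fld := ι (rename (![1, 2] : Fin 2 → Fin 3) (pderiv 0 gp)) with hαdef
  set β : Fld := ι (rename (![1, 2] : Fin 2 → Fin 3) (pderiv 0 gq)) with hβdef
  set fpA : Fld := aeval ![Xv 0, Xv 2] fp
  set fqA : Fld := aeval ![Xv 0, Xv 2] fq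
  set P : Fld := aeval ![t, Xv 2] fp
  set Q : Fld := aeval ![t, Xv 2] fq
  set Px : Fld := aeval ![t, Xv 2] (pderiv 0 fp)
  set Qx : Fld := aeval ![t, Xv 2] (pderiv 0 fq)
  have hK2 : fpA * (Qx * α + ((N : Fld) * Q - t * Qx) * (Xv 0 * β))
      = (Px * α + ((N : Fld) * P - t * Px) * (Xv 0 * β)) * fqA := by
    apply mul_left_cancel₀ hcne
    linear_combination hK
  have hProd : (fpA * Qx - Px * fqA) * (α - t * Xv 0 * β) = 0 := by
    linear_combination hK2 - ((N : Fld) * (Xv 0 * β)) * hE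
  rcases mul_eq_zero.mp hProd with hcase | hcase
  · -- left disjunct
    left
    have hQP : Q * Px - P * Qx = 0 := by
      have h9 : fqA * (Q * Px - P * Qx) = 0 := by
        linear_combination (-Q) * hcase + Qx * hE
      rcases mul_eq_zero.mp h9 with h' | h'
      · exact absurd h' hfqA
      · exact h'
    have haeval : aeval ![t, Xv 2] (fq * pderiv 0 fp - fp * pderiv 0 fq) = 0 := by
      rw [map_sub, map_mul, map_mul]
      linear_combination hQP
    -- use the transcendence of t over z
    by_contra hne
    have hW0 : ι (aeval (vR gp gq) (homN (fq * pderiv 0 fp - fp * pderiv 0 fq)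
        (degreeOf 0 (fq * pderiv 0 fp - fp * pderiv 0 fq)))) = 0 := by
      rw [iota_vR, homN_eval _ _ _ hb le_rfl, ht, haeval, mul_zero]
    have hWne := homN_aeval_ne_zero hgp hgq hne
      (le_refl (degreeOf 0 (fq * pderiv 0 fp - fp * pderiv 0 fq)))
    exact hWne (ι_inj (by rw [hW0, map_zero]))
  · -- right disjunct
    right
    have hαβ : α * Bq - A * β = 0 := by
      have htu : t * (Xv 0 * Bq) = A := by rw [← ht]; field_simp
      have := hcase
      -- α = t * Xv 0 * β
      have h10 : (α - t * Xv 0 * β) * (Xv 0 * Bq) = (α * Bq - A * β) * Xv 0 := by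
        rw [sub_mul]
        rw [show t * Xv 0 * β * (Xv 0 * Bq) = t * (Xv 0 * Bq) * β * Xv 0 by ring, htu]
        ring
      rw [hcase, zero_mul] at h10
      rcases mul_eq_zero.mp h10.symm with h' | h'
      · exact h'
      · exact absurd h' hu
    have hιg : ι (rename (![1, 2] : Fin 2 → Fin 3) (gq * pderiv 0 gp - gp * pderiv 0 gq)) = 0 := by
      rw [map_sub, map_mul, map_mul, map_sub, map_mul, map_mul]
      show Bq * α - A * β = 0
      linear_combination hαβ
    have h0 : rename (![1, 2] : Fin 2 → Fin 3) (gq * pderiv 0 gp - gp * pderiv 0 gq) = 0 :=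
      ι_inj (by simpa using hιg)
    exact rename_injective _ e12_inj (by simpa using h0)
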